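/- If some abscissa S_p is finite then L(λ) is finite: let λ be a frequency, 2 ≤ p < ∞, and suppose there exist σ > 0 and C > 0 such that Σ_n |a_n| e^{-λ_n σ} ≤ C ‖D‖_p for every Dirichlet polynomial D = Σ a_n e^{-λ_n s}. Then L(λ) ≤ pσ. In particular L(λ) < ∞. -/

import Mathlib

open Finset Filter

/-- The Besicovitch `r`-norm of a function on the real line. -/
noncomputable def bNorm (r : ℝ) (f : ℝ → ℂ) : ℝ :=
  (Filter.limsup (fun T : ℝ => (1 / (2 * T)) * ∫ t in (-T)..T, ‖f t‖ ^ r)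
    Filter.atTop) ^ (1 / r)

section Aux
open Complex MeasureTheory


lemma cont_exp (c : ℂ) : Continuous fun t : ℝ => Complex.exp (c * t) :=
  Complex.continuous_exp.comp (continuous_const.mul Complex.continuous_ofReal)

lemma term_int (c : ℂ) (T : ℝ) :
    IntervalIntegrable (fun t : ℝ => Complex.exp (c * t)) volume (-T) T :=
  (cont_exp c).intervalIntegrable _ _

lemma term_eval_diag (T : ℝ) :
    (∫ t in (-T)..T, Complex.exp (((0 : ℝ) : ℂ) * I * t)) = ((2 * T : ℝ) : ℂ) := by
  simp only [Complex.ofReal_zero, zero_mul, Complex.exp_zero]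
  rw [intervalIntegral.integral_const]
  push_cast
  simp
  ring

lemma term_eval_off (r : ℝ) (hr : r ≠ 0) (T : ℝ) :
    ‖∫ t in (-T)..T, Complex.exp (((r : ℝ) : ℂ) * I * t)‖ ≤ 2 / |r| := by
  have hc : ((r : ℂ) * I) ≠ 0 := by
    simp [Complex.ext_iff, hr, Complex.I_ne_zero]
  rw [integral_exp_mul_complex hc, norm_div]
  have h1 : ‖(r : ℂ) * I‖ = |r| := by
    simp
  rw [h1]
  gcongr
  have e1 : ∀ s : ℝ, ‖Complex.exp ((r:ℂ) * I * (s:ℂ))‖ = 1 := by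
    intro s
    simp [Complex.norm_exp]
  calc ‖Complex.exp ((r:ℂ) * I * (T:ℂ)) - Complex.exp ((r:ℂ) * I * ((-T : ℝ):ℂ))‖
      ≤ ‖Complex.exp ((r:ℂ) * I * (T:ℂ))‖ + ‖Complex.exp ((r:ℂ) * I * ((-T : ℝ):ℂ))‖ :=
        norm_sub_le _ _
    _ = 2 := by rw [e1, e1]; norm_num

lemma int_re (lam : ℕ → ℝ) (N : ℕ) (T : ℝ) :
    (∫ t in (-T)..T, (∑ m ∈ Finset.range N, ∑ n ∈ Finset.range N,
        Complex.exp ((((lam n - lam m : ℝ) : ℂ) * I) * t)).re)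
      = (∑ m ∈ Finset.range N, ∑ n ∈ Finset.range N,
          ∫ t in (-T)..T, Complex.exp ((((lam n - lam m : ℝ) : ℂ) * I) * t)).re := by
  have hint : IntervalIntegrable (fun t : ℝ => ∑ m ∈ Finset.range N, ∑ n ∈ Finset.range N,
      Complex.exp ((((lam n - lam m : ℝ) : ℂ) * I) * t)) volume (-T) T :=
    Continuous.intervalIntegrable (continuous_finset_sum _ fun m _ =>
      continuous_finset_sum _ fun n _ => cont_exp _) _ _
  have h2 := ContinuousLinearMap.intervalIntegral_comp_comm Complex.reCLM hint
  simp only [Complex.reCLM_apply] at h2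
  rw [h2, intervalIntegral.integral_finset_sum (fun m _ =>
      Continuous.intervalIntegrable (continuous_finset_sum _ fun n _ => cont_exp _) _ _)]
  congr 1
  exact Finset.sum_congr rfl fun m _ =>
    intervalIntegral.integral_finset_sum (fun n _ => term_int _ _)

lemma l2_bound (lam : ℕ → ℝ) (h1 : StrictMono lam) (N : ℕ) :
    ∃ K : ℝ, 0 ≤ K ∧ ∀ T : ℝ,
      (∫ t in (-T)..T, ‖∑ n ∈ Finset.range N, Complex.exp (-(lam n * t) * I)‖ ^ 2) ≤
        2 * T * N + K := by
  refine ⟨∑ m ∈ Finset.range N, ∑ n ∈ (Finset.range N).erase m, 2 / |lam n - lam m|,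
    by positivity, ?_⟩
  intro T
  have hpt : ∀ t : ℝ, ‖∑ n ∈ Finset.range N, Complex.exp (-(lam n * t) * I)‖ ^ 2
      = (∑ m ∈ Finset.range N, ∑ n ∈ Finset.range N,
          Complex.exp ((((lam n - lam m : ℝ) : ℂ) * I) * t)).re := by
    intro t
    have key : (∑ n ∈ Finset.range N, Complex.exp (-(lam n * t) * I)) *
        (starRingEnd ℂ) (∑ n ∈ Finset.range N, Complex.exp (-(lam n * t) * I))
        = ∑ m ∈ Finset.range N, ∑ n ∈ Finset.range N,
            Complex.exp ((((lam n - lam m : ℝ) : ℂ) * I) * t) := by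
      rw [map_sum, Finset.sum_mul_sum]
      refine Finset.sum_congr rfl fun m _ => Finset.sum_congr rfl fun n _ => ?_
      rw [← Complex.exp_conj, ← Complex.exp_add]
      congr 1
      simp only [map_mul, map_neg, Complex.conj_ofReal, Complex.conj_I]
      push_cast
      ring
    rw [← key, Complex.mul_conj, Complex.ofReal_re, Complex.normSq_eq_norm_sq]
  simp_rw [hpt]
  rw [int_re]
  set J : ℕ → ℕ → ℂ := fun m n => ∫ t in (-T)..T,
    Complex.exp ((((lam n - lam m : ℝ) : ℂ) * I) * t) with hJ
  have hre : (∑ m ∈ Finset.range N, ∑ n ∈ Finset.range N, J m n).re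
      = ∑ m ∈ Finset.range N, (∑ n ∈ Finset.range N, J m n).re := by
    simp [Complex.re_sum]
  rw [hre]
  have hbound : ∀ m ∈ Finset.range N,
      (∑ n ∈ Finset.range N, J m n).re
        ≤ 2 * T + ∑ n ∈ (Finset.range N).erase m, 2 / |lam n - lam m| := by
    intro m hm
    rw [← Finset.add_sum_erase _ _ hm, Complex.add_re, Complex.re_sum]
    have hdiag : (J m m).re = 2 * T := by
      have : ((lam m - lam m : ℝ) : ℂ) = ((0:ℝ):ℂ) := by norm_num
      rw [hJ]
      simp only [this]
      rw [term_eval_diag]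
      simp
    rw [hdiag]
    gcongr with n hn
    have hne : lam n - lam m ≠ 0 := by
      have : n ≠ m := Finset.ne_of_mem_erase hn
      exact sub_ne_zero.mpr (fun hcontra => this (h1.injective hcontra))
    calc (J m n).re ≤ ‖J m n‖ := Complex.re_le_norm _
      _ ≤ 2 / |lam n - lam m| := term_eval_off _ hne T
  calc ∑ m ∈ Finset.range N, (∑ n ∈ Finset.range N, J m n).re
      ≤ ∑ m ∈ Finset.range N,
          (2 * T + ∑ n ∈ (Finset.range N).erase m, 2 / |lam n - lam m|) :=
        Finset.sum_le_sum hbound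
    _ = 2 * T * N + ∑ m ∈ Finset.range N, ∑ n ∈ (Finset.range N).erase m,
          2 / |lam n - lam m| := by
        rw [Finset.sum_add_distrib, Finset.sum_const, Finset.card_range]
        push_cast
        ring

lemma bNorm_le (lam : ℕ → ℝ) (h1 : StrictMono lam) (p : ℝ) (hp : 2 ≤ p) (N : ℕ)
    (hN : 0 < N) :
    bNorm p (fun t => ∑ n ∈ Finset.range N, Complex.exp (-(lam n * t) * I)) ≤
      (N : ℝ) ^ (1 - 1/p) := by
  obtain ⟨K, hK0, hK⟩ := l2_bound lam h1 N
  set D : ℝ → ℂ := fun t => ∑ n ∈ Finset.range N, Complex.exp (-(lam n * t) * I) with hD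
  have hp0 : (0:ℝ) < p := by linarith
  have hNpos : (0:ℝ) < N := by exact_mod_cast hN
  have hDcont : Continuous D :=
    continuous_finset_sum _ fun n _ => Complex.continuous_exp.comp
      (((continuous_const.mul Complex.continuous_ofReal).neg).mul continuous_const)
  have hDle : ∀ t, ‖D t‖ ≤ (N : ℝ) := by
    intro t
    calc ‖D t‖ ≤ ∑ n ∈ Finset.range N, ‖Complex.exp (-(lam n * t) * I)‖ := norm_sum_le _ _
      _ = ∑ n ∈ Finset.range N, 1 := by
          refine Finset.sum_congr rfl fun n _ => ?_
          simp [Complex.norm_exp]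
      _ = (N : ℝ) := by simp
  -- pointwise rpow bound
  have hptw : ∀ t, ‖D t‖ ^ p ≤ (N : ℝ) ^ (p - 2) * ‖D t‖ ^ (2:ℕ) := by
    intro t
    rcases eq_or_lt_of_le (norm_nonneg (D t)) with h0 | h0
    · rw [← h0, Real.zero_rpow (by linarith)]
      positivity
    · have : ‖D t‖ ^ p = ‖D t‖ ^ (p - 2) * ‖D t‖ ^ (2:ℕ) := by
        rw [← Real.rpow_natCast (‖D t‖) 2, ← Real.rpow_add h0]
        norm_num
      rw [this]
      exact mul_le_mul_of_nonneg_right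
        (Real.rpow_le_rpow (le_of_lt h0) (hDle t) (by linarith)) (by positivity)
  -- integral bound
  have hint : ∀ T : ℝ, 0 ≤ T →
      (∫ t in (-T)..T, ‖D t‖ ^ p) ≤ (N:ℝ) ^ (p - 2) * (2 * T * N + K) := by
    intro T hT
    have i1 : IntervalIntegrable (fun t => ‖D t‖ ^ p) volume (-T) T := by
      apply Continuous.intervalIntegrable
      exact hDcont.norm.rpow_const (fun t => Or.inr (le_of_lt hp0))
    have i2 : IntervalIntegrable (fun t => (N:ℝ) ^ (p - 2) * ‖D t‖ ^ (2:ℕ)) volume (-T) T := by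
      apply Continuous.intervalIntegrable
      exact continuous_const.mul (hDcont.norm.pow 2)
    calc (∫ t in (-T)..T, ‖D t‖ ^ p)
        ≤ ∫ t in (-T)..T, (N:ℝ) ^ (p - 2) * ‖D t‖ ^ (2:ℕ) := by
          apply intervalIntegral.integral_mono_on (by linarith) i1 i2
          exact fun t _ => hptw t
      _ = (N:ℝ) ^ (p - 2) * ∫ t in (-T)..T, ‖D t‖ ^ (2:ℕ) := by
          rw [← intervalIntegral.integral_const_mul]
      _ ≤ (N:ℝ) ^ (p - 2) * (2 * T * N + K) :=
          mul_le_mul_of_nonneg_left (hK T) (by positivity)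
  -- limsup bound
  set A : ℝ → ℝ := fun T => (1 / (2 * T)) * ∫ t in (-T)..T, ‖D t‖ ^ p with hA
  set g : ℝ → ℝ := fun T => (N:ℝ) ^ (p - 1) + (N:ℝ) ^ (p - 2) * K * (1 / (2 * T)) with hg
  have hev : ∀ᶠ T in atTop, A T ≤ g T := by
    filter_upwards [eventually_gt_atTop (0:ℝ)] with T hT
    have h2T : (0:ℝ) < 2 * T := by linarith
    have := hint T (le_of_lt hT)
    calc A T ≤ (1 / (2 * T)) * ((N:ℝ) ^ (p - 2) * (2 * T * N + K)) :=
          mul_le_mul_of_nonneg_left this (by positivity)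
      _ = (N:ℝ) ^ (p - 2) * N + (N:ℝ) ^ (p - 2) * K * (1 / (2 * T)) := by
          field_simp
      _ = g T := by
          rw [hg]
          dsimp only
          congr 2
          rw [show p - 1 = (p - 2) + 1 by ring, Real.rpow_add hNpos, Real.rpow_one]
  have hg_tendsto : Tendsto g atTop (nhds ((N:ℝ) ^ (p - 1))) := by
    have : Tendsto (fun T : ℝ => (1 / (2 * T))) atTop (nhds 0) := by
      apply Tendsto.div_atTop tendsto_const_nhds
      exact (tendsto_const_mul_atTop_of_pos (by norm_num : (0:ℝ) < 2)).mpr tendsto_id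
    have := (tendsto_const_nhds.add (tendsto_const_nhds.mul this) :
      Tendsto (fun T : ℝ => (N:ℝ) ^ (p-1) + (N:ℝ) ^ (p-2) * K * (1 / (2 * T)))
        atTop (nhds ((N:ℝ) ^ (p-1) + (N:ℝ) ^ (p-2) * K * 0)))
    rw [mul_zero, add_zero] at this
    exact this
  have hAnonneg : ∀ᶠ T in atTop, 0 ≤ A T := by
    filter_upwards [eventually_gt_atTop (0:ℝ)] with T hT
    have : 0 ≤ ∫ t in (-T)..T, ‖D t‖ ^ p :=
      intervalIntegral.integral_nonneg (by linarith) (fun t _ => by positivity)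
    positivity
  have hAboundedLe : IsBoundedUnder (· ≤ ·) atTop A :=
    (hg_tendsto.isBoundedUnder_le).mono_le hev
  have hlimsup_le : limsup A atTop ≤ (N:ℝ) ^ (p - 1) := by
    have h1' := Filter.limsup_le_limsup hev
      (IsBoundedUnder.isCoboundedUnder_le ⟨0, by
        simpa [eventually_map] using hAnonneg⟩)
      hg_tendsto.isBoundedUnder_le
    rwa [hg_tendsto.limsup_eq] at h1'
  have hlimsup_nonneg : 0 ≤ limsup A atTop :=
    le_limsup_of_frequently_le hAnonneg.frequently hAboundedLe
  rw [bNorm]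
  calc (limsup A atTop) ^ (1/p) ≤ ((N:ℝ) ^ (p - 1)) ^ (1/p) :=
        Real.rpow_le_rpow hlimsup_nonneg hlimsup_le (by positivity)
    _ = (N : ℝ) ^ (1 - 1/p) := by
        rw [← Real.rpow_mul (le_of_lt hNpos)]
        congr 1
        field_simp

end Aux

open Complex MeasureTheory in
/-- If some abscissa `S_p` is finite then `L(λ)` is finite: if
`Σ|a_n|e^{-λ_nσ} ≤ C‖D‖_p` for all Dirichlet polynomials and some `2 ≤ p < ∞`, `σ > 0`,
then `L(λ) ≤ pσ`. -/
theorem L_le_of_Sp_bound (lam : ℕ → ℝ) (h1 : StrictMono lam) (h2 : ∀ n, 0 ≤ lam n)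
    (h3 : Tendsto lam atTop atTop) (p : ℝ) (hp : 2 ≤ p) (σ : ℝ) (hσ : 0 < σ)
    (C : ℝ) (hC : 0 < C)
    (h : ∀ (N : ℕ) (a : ℕ → ℂ),
      ∑ n ∈ Finset.range N, ‖a n‖ * Real.exp (-(lam n) * σ) ≤
        C * bNorm p (fun t =>
          ∑ n ∈ Finset.range N, a n * Complex.exp (-(lam n * t) * Complex.I))) :
    Filter.limsup (fun n : ℕ => ((Real.log n / lam n : ℝ) : EReal)) atTop ≤
      ((p * σ : ℝ) : EReal) := by
  have hp0 : (0:ℝ) < p := by linarith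
  -- key inequality for every n
  have key : ∀ n : ℕ, Real.log (n + 1) ≤ p * Real.log C + p * σ * lam n := by
    intro n
    have happ := h (n + 1) (fun _ => (1:ℂ))
    simp only [norm_one, one_mul] at happ
    have hb := bNorm_le lam h1 p hp (n + 1) (Nat.succ_pos n)
    have hsum : ((n:ℝ) + 1) * Real.exp (-(lam n) * σ) ≤
        ∑ k ∈ Finset.range (n + 1), Real.exp (-(lam k) * σ) := by
      have := Finset.card_nsmul_le_sum (Finset.range (n + 1))
        (fun k => Real.exp (-(lam k) * σ)) (Real.exp (-(lam n) * σ)) (fun k hk => by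
          have hkn : k ≤ n := Nat.lt_succ_iff.mp (Finset.mem_range.mp hk)
          have : lam k ≤ lam n := h1.monotone hkn
          apply Real.exp_le_exp.mpr
          nlinarith)
      simpa [Finset.card_range, nsmul_eq_mul] using this
    have hX : ((n:ℝ) + 1) * Real.exp (-(lam n) * σ) ≤ C * ((n:ℝ) + 1) ^ (1 - 1/p) := by
      refine hsum.trans (happ.trans ?_)
      have : C * bNorm p (fun t =>
          ∑ k ∈ Finset.range (n + 1), Complex.exp (-(lam k * t) * Complex.I)) ≤
          C * (((n + 1 : ℕ)):ℝ) ^ (1 - 1/p) :=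
        mul_le_mul_of_nonneg_left hb (le_of_lt hC)
      push_cast at this
      exact this
    set X : ℝ := (n:ℝ) + 1 with hXdef
    have hXpos : (0:ℝ) < X := by positivity
    have hsplit : X = X ^ (1/p) * X ^ (1 - 1/p) := by
      rw [← Real.rpow_add hXpos]
      norm_num
    have hdiv : X ^ (1/p) * Real.exp (-(lam n) * σ) ≤ C := by
      have h2' : X ^ (1/p) * X ^ (1 - 1/p) * Real.exp (-(lam n) * σ) ≤
          C * X ^ (1 - 1/p) := by rw [← hsplit]; exact hX
      have hpow : (0:ℝ) < X ^ (1 - 1/p) := Real.rpow_pos_of_pos hXpos _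
      calc X ^ (1/p) * Real.exp (-(lam n) * σ)
          = (X ^ (1/p) * X ^ (1 - 1/p) * Real.exp (-(lam n) * σ)) / X ^ (1 - 1/p) := by
            field_simp
        _ ≤ (C * X ^ (1 - 1/p)) / X ^ (1 - 1/p) := by gcongr
        _ = C := by field_simp
    have hfin : X ^ (1/p) ≤ C * Real.exp (lam n * σ) := by
      have := mul_le_mul_of_nonneg_right hdiv (le_of_lt (Real.exp_pos (lam n * σ)))
      rwa [mul_assoc, ← Real.exp_add, neg_mul, neg_add_cancel, Real.exp_zero, mul_one] at this
    have hlog := Real.log_le_log (Real.rpow_pos_of_pos hXpos _) hfin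
    rw [Real.log_rpow hXpos, Real.log_mul (ne_of_gt hC) (ne_of_gt (Real.exp_pos _)),
      Real.log_exp] at hlog
    have : (1/p) * Real.log X * p ≤ (Real.log C + lam n * σ) * p :=
      mul_le_mul_of_nonneg_right hlog (le_of_lt hp0)
    have hXlog : Real.log X = (1/p) * Real.log X * p := by field_simp
    rw [hXdef] at hXlog ⊢
    nlinarith [hXlog]
  -- conclude in EReal
  have hev : ∀ᶠ n : ℕ in atTop,
      ((Real.log n / lam n : ℝ) : EReal) ≤
        ((p * Real.log C / lam n + p * σ : ℝ) : EReal) := by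
    filter_upwards [h3.eventually_gt_atTop 0, eventually_ge_atTop 1] with n hln hn1
    rw [EReal.coe_le_coe_iff]
    have hlogn : Real.log n ≤ p * Real.log C + p * σ * lam n := by
      refine le_trans ?_ (key n)
      apply Real.log_le_log (by exact_mod_cast hn1)
      linarith
    calc Real.log n / lam n ≤ (p * Real.log C + p * σ * lam n) / lam n :=
          by gcongr
      _ = p * Real.log C / lam n + p * σ := by
          field_simp
  have hg : Tendsto (fun n : ℕ => ((p * Real.log C / lam n + p * σ : ℝ) : EReal)) atTop
      (nhds ((p * σ : ℝ) : EReal)) := by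
    have hr : Tendsto (fun n : ℕ => p * Real.log C / lam n + p * σ) atTop (nhds (p * σ)) := by
      have h0 : Tendsto (fun n : ℕ => p * Real.log C / lam n) atTop (nhds 0) :=
        Tendsto.div_atTop tendsto_const_nhds h3
      have := h0.add (tendsto_const_nhds : Tendsto (fun _ : ℕ => p * σ) atTop (nhds (p * σ)))
      simpa using this
    exact (continuous_coe_real_ereal.tendsto _).comp hr
  calc Filter.limsup (fun n : ℕ => ((Real.log n / lam n : ℝ) : EReal)) atTop
      ≤ Filter.limsup (fun n : ℕ => ((p * Real.log C / lam n + p * σ : ℝ) : EReal)) atTop :=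
        Filter.limsup_le_limsup hev
    _ = ((p * σ : ℝ) : EReal) := hg.limsup_eq
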